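/- Let f : Finset V → ℝ be a nonnegative, monotone, submodular function with f(∅)=0, and suppose the greedy algorithm at each of K steps selects an element whose marginal gain is at least (1-ε) times the best marginal gain at that step (0 ≤ ε < 1). Then the resulting set G of size K satisfies f(G) ≥ (1 - e^{-(1-ε)}) · max{ f(S) : |S| ≤ K }. -/

import Mathlib

open Finset

/-- Approximate greedy: if at each step the chosen element's marginal gain is at least
(1-ε) times the best marginal gain, the result is a (1 - e^{-(1-ε)}) approximation. -/
theorem approx_greedy_bound {V : Type*} [DecidableEq V] [Fintype V]
    (f : Finset V → ℝ)
    (hnonneg : ∀ S : Finset V, 0 ≤ f S)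
    (hmono : ∀ S T : Finset V, S ⊆ T → f S ≤ f T)
    (hsub : ∀ S T : Finset V, S ⊆ T → ∀ z ∉ T,
      f (insert z T) - f T ≤ f (insert z S) - f S)
    (hempty : f ∅ = 0)
    (ε : ℝ) (hε0 : 0 ≤ ε) (hε1 : ε < 1)
    (K : ℕ) (hK : 0 < K)
    (g : ℕ → Finset V) (hg0 : g 0 = ∅)
    (hstep : ∀ i < K, ∃ z : V, z ∉ g i ∧ g (i + 1) = insert z (g i) ∧
      ∀ y : V, (1 - ε) * (f (insert y (g i)) - f (g i)) ≤ f (insert z (g i)) - f (g i))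
    (S : Finset V) (hS : S.card ≤ K) :
    (1 - Real.exp (-(1 - ε))) * f S ≤ f (g K) := by
  -- Telescoping/submodularity lemma
  have tele : ∀ (A T : Finset V), f (A ∪ T) ≤ f A + ∑ y ∈ T, (f (insert y A) - f A) := by
    intro A T
    induction T using Finset.induction_on with
    | empty => simp
    | insert _ _ ha ih =>
      rename_i a T'
      rw [Finset.sum_insert ha, Finset.union_insert]
      have h1 : f (insert a (A ∪ T')) ≤ f (A ∪ T') + (f (insert a A) - f A) := by
        by_cases hmem : a ∈ A ∪ T'
        · rw [Finset.insert_eq_self.mpr hmem]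
          have := hmono A (insert a A) (Finset.subset_insert a A)
          linarith
        · have := hsub A (A ∪ T') Finset.subset_union_left a hmem
          linarith
      linarith
  set r : ℝ := 1 - (1 - ε) / K with hr
  have hKpos : (0:ℝ) < K := by exact_mod_cast hK
  have hK1 : (1:ℝ) ≤ K := by exact_mod_cast hK
  have hr0 : 0 ≤ r := by
    have : (1 - ε) / K ≤ 1 := by
      rw [div_le_one hKpos]; linarith
    rw [hr]; linarith
  have key : ∀ i ≤ K, f S - f (g i) ≤ r ^ i * f S := by
    intro i
    induction i with
    | zero => intro _; simp [hg0, hempty]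
    | succ i ih =>
      intro hiK
      have hi : i < K := hiK
      have ih' := ih (Nat.le_of_lt hi)
      obtain ⟨z, hz, hgi1, hbest⟩ := hstep i hi
      set Δ := f (insert z (g i)) - f (g i) with hΔ
      have hΔ0 : 0 ≤ Δ := by
        have := hmono (g i) (insert z (g i)) (Finset.subset_insert _ _)
        rw [hΔ]; linarith
      have hmain : (1 - ε) * (f S - f (g i)) ≤ K * Δ := by
        have h1 : f S ≤ f (g i ∪ S) := hmono _ _ Finset.subset_union_right
        have h2 := tele (g i) S
        have h5 : f S - f (g i) ≤ ∑ y ∈ S, (f (insert y (g i)) - f (g i)) := by linarith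
        have h6 : (1 - ε) * (f S - f (g i))
            ≤ (1 - ε) * ∑ y ∈ S, (f (insert y (g i)) - f (g i)) :=
          mul_le_mul_of_nonneg_left h5 (by linarith)
        have h3 : (1 - ε) * ∑ y ∈ S, (f (insert y (g i)) - f (g i)) ≤ S.card * Δ := by
          rw [Finset.mul_sum]
          calc ∑ y ∈ S, (1 - ε) * (f (insert y (g i)) - f (g i))
              ≤ ∑ _y ∈ S, Δ := Finset.sum_le_sum (fun y _ => hbest y)
            _ = S.card * Δ := by rw [Finset.sum_const, nsmul_eq_mul]
        have h4 : (S.card : ℝ) * Δ ≤ K * Δ := by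
          apply mul_le_mul_of_nonneg_right _ hΔ0
          exact_mod_cast hS
        linarith
      have hrec : f S - f (g (i + 1)) ≤ r * (f S - f (g i)) := by
        rw [hgi1]
        have hdiv : (1 - ε) / K * (f S - f (g i)) ≤ Δ := by
          rw [div_mul_eq_mul_div, div_le_iff₀ hKpos]
          linarith [hmain]
        have hexpand : r * (f S - f (g i))
            = (f S - f (g i)) - (1 - ε) / K * (f S - f (g i)) := by
          rw [hr]; ring
        rw [hΔ] at hdiv
        calc f S - f (insert z (g i))
            ≤ f S - f (g i) - (1 - ε) / K * (f S - f (g i)) := by linarith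
          _ = r * (f S - f (g i)) := hexpand.symm
      calc f S - f (g (i + 1)) ≤ r * (f S - f (g i)) := hrec
        _ ≤ r * (r ^ i * f S) := mul_le_mul_of_nonneg_left ih' hr0
        _ = r ^ (i + 1) * f S := by ring
  have hfin := key K le_rfl
  have hexp : r ^ K ≤ Real.exp (-(1 - ε)) := by
    have h1 : r ≤ Real.exp (-(1 - ε) / K) := by
      have := Real.add_one_le_exp (-(1 - ε) / K)
      rw [hr]
      have : -(1 - ε) / K + 1 ≤ Real.exp (-(1 - ε) / K) := this
      have heq : -(1 - ε) / K + 1 = 1 - (1 - ε) / K := by ring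
      linarith [heq ▸ this]
    calc r ^ K ≤ Real.exp (-(1 - ε) / K) ^ K := pow_le_pow_left₀ hr0 h1 K
      _ = Real.exp (-(1 - ε)) := by
        rw [← Real.exp_nat_mul]
        congr 1
        field_simp
  have hfs : r ^ K * f S ≤ Real.exp (-(1 - ε)) * f S :=
    mul_le_mul_of_nonneg_right hexp (hnonneg S)
  linarith
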